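/- Let μ ∈ ℂ with Re μ > 0 and let λ ∈ ℂ with |λ| = 1. If f ∈ F_μ satisfies f'(0) = (μ/π)(λ − 1), then f(z) = ((1 − z)/(1 − λz))^{μ/π} for all z ∈ D, where the power is defined via the branch of log((1−z)/(1−λz)) vanishing at z = 0. -/

import Mathlib

open Complex Set Metric

noncomputable section

/-- The open unit disk in `ℂ`. -/
def unitDisk : Set ℂ := Metric.ball (0 : ℂ) 1

/-- `P_f(z) = (2π/μ)·(z f'(z)/f(z)) + (1+z)/(1−z)`. -/
def Pfun (μ : ℂ) (f : ℂ → ℂ) (z : ℂ) : ℂ :=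
  2 * (Real.pi : ℂ) / μ * (z * deriv f z / f z) + (1 + z) / (1 - z)

/-- Membership in the class `F_μ`: analytic, non-vanishing on the disk, `f(0) = 1`,
and `Re P_f > 0` on the disk. -/
def memF (μ : ℂ) (f : ℂ → ℂ) : Prop :=
  AnalyticOnNhd ℂ f unitDisk ∧ (∀ z ∈ unitDisk, f z ≠ 0) ∧ f 0 = 1 ∧
    ∀ z ∈ unitDisk, 0 < (Pfun μ f z).re

/-- Membership in the class `F_μ(λ)`: `f ∈ F_μ` with `f'(0) = (μ/π)(λ − 1)`. -/
def memFlam (μ lam : ℂ) (f : ℂ → ℂ) : Prop :=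
  memF μ f ∧ deriv f 0 = μ / (Real.pi : ℂ) * (lam - 1)

/-- The branch of `log f` vanishing at `0`: `log f(z) = ∫₀^z f'(ζ)/f(ζ) dζ`
(integral over the segment from `0` to `z`). -/
def logf (f : ℂ → ℂ) (z : ℂ) : ℂ :=
  ∫ t in (0:ℝ)..1, deriv f (t * z) / f (t * z) * z

/-- The region of variability `V(z₀, λ) = {log f(z₀) : f ∈ F_μ(λ)}`. -/
def Vset (μ lam z₀ : ℂ) : Set ℂ := {w | ∃ f, memFlam μ lam f ∧ w = logf f z₀}

/-- `δ(w, λ) = (w + λ)/(1 + conj(λ) w)`. -/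
def dl (lam w : ℂ) : ℂ := (w + lam) / (1 + (starRingEnd ℂ) lam * w)

/-- `log H_{a,λ}(z) = (μ/π)·∫₀^z (δ(aζ,λ) − 1)/((1 − δ(aζ,λ)ζ)(1 − ζ)) dζ`
(integral over the segment from `0` to `z`). -/
def Hlog (μ lam a z : ℂ) : ℂ :=
  μ / (Real.pi : ℂ) *
    ∫ t in (0:ℝ)..1,
      (dl lam (a * (t * z)) - 1) /
        ((1 - dl lam (a * (t * z)) * (t * z)) * (1 - t * z)) * z

/-- The function `H_{a,λ}(z) = exp(log H_{a,λ}(z))`. -/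
def Hfun (μ lam a z : ℂ) : ℂ := Complex.exp (Hlog μ lam a z)

/-- `c(z, λ)`. -/
def cfun (z lam : ℂ) : ℂ :=
  ((‖z‖ : ℂ) ^ 2 * ((starRingEnd ℂ) z - lam) * (1 - (starRingEnd ℂ) lam)
      - (1 - lam) * (1 - (starRingEnd ℂ) lam * (starRingEnd ℂ) z)) /
    ((1 - z) * (1 - (‖z‖ : ℂ) ^ 2)
      * (1 + (‖z‖ : ℂ) ^ 2 - 2 * ((lam * z).re : ℂ)))

/-- `r(z, λ)`. -/
def rfun (z lam : ℂ) : ℝ :=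
  (1 - ‖lam‖ ^ 2) * ‖z‖ /
    ((1 - ‖z‖ ^ 2) * (1 + ‖z‖ ^ 2 - 2 * (lam * z).re))

/-- A starlike univalent function on the unit disk: analytic, `φ(0) = 0`, `φ'(0) = 1`,
univalent, and `Re(z φ'(z)/φ(z)) > 0` on the disk. -/
def IsStarlike (φ : ℂ → ℂ) : Prop :=
  AnalyticOnNhd ℂ φ unitDisk ∧ φ 0 = 0 ∧ deriv φ 0 = 1 ∧
    Set.InjOn φ unitDisk ∧
    ∀ z ∈ unitDisk, z ≠ 0 → 0 < (z * deriv φ z / φ z).re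

/-- `G(z) = (μ/π)·∫₀^z e^{iθ}ζ/(1 + (conj(λ)e^{iθ} − λ)ζ − e^{iθ}ζ²)² dζ`
(integral over the segment from `0` to `z`). -/
def Gfun (μ lam : ℂ) (θ : ℝ) (z : ℂ) : ℂ :=
  μ / (Real.pi : ℂ) *
    ∫ t in (0:ℝ)..1,
      Complex.exp (θ * Complex.I) * (t * z) /
        (1 + ((starRingEnd ℂ) lam * Complex.exp (θ * Complex.I) - lam) * (t * z)
          - Complex.exp (θ * Complex.I) * (t * z) ^ 2) ^ 2 * z

end

lemma one_sub_ne' (z : ℂ) (hz : ‖z‖ < 1) : (1:ℂ) - z ≠ 0 := by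
  intro h
  rw [sub_eq_zero] at h
  rw [← h] at hz
  simp at hz

lemma slit' (lam z : ℂ) (hlam : ‖lam‖ = 1) (hz : ‖z‖ < 1) :
    (1 - z) / (1 - lam * z) ∈ Complex.slitPlane := by
  by_contra hcon
  rw [Complex.mem_slitPlane_iff] at hcon
  push_neg at hcon
  obtain ⟨hre, him⟩ := hcon
  set w := (1 - z) / (1 - lam * z) with hw
  have hzlam : ‖lam * z‖ < 1 := by rw [norm_mul, hlam, one_mul]; exact hz
  have hden : (1:ℂ) - lam * z ≠ 0 := one_sub_ne' _ hzlam
  have h1 : 1 - z = w * (1 - lam * z) := (div_eq_iff hden).mp rfl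
  have h2 : z * (1 - w * lam) = 1 - w := by linear_combination -h1
  have habs : ‖z‖ * ‖1 - w * lam‖ = ‖1 - w‖ := by
    rw [← norm_mul, h2]
  have hwre : w = ((w.re : ℝ) : ℂ) := Complex.ext rfl (by simp [him])
  have habs1 : ‖1 - w‖ = 1 - w.re := by
    rw [hwre]
    rw [show (1:ℂ) - ((w.re : ℝ) : ℂ) = (((1 - w.re : ℝ)) : ℂ) by push_cast; ring]
    rw [Complex.norm_real, Real.norm_eq_abs, _root_.abs_of_nonneg (by linarith)]
    simp
  have habsw : ‖w‖ = -w.re := by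
    conv_lhs => rw [hwre]
    rw [Complex.norm_real, Real.norm_eq_abs, abs_of_nonpos hre]
  have habs2 : ‖1 - w * lam‖ ≤ 1 - w.re := by
    calc ‖1 - w * lam‖ ≤ ‖(1:ℂ)‖ + ‖w * lam‖ := norm_sub_le _ _
      _ = 1 - w.re := by rw [norm_mul, hlam, mul_one, norm_one, habsw]; ring
  nlinarith [norm_nonneg z, norm_nonneg (1 - w * lam)]

lemma hasDerivAt_L' (lam z : ℂ) (hlam : ‖lam‖ = 1) (hz : ‖z‖ < 1) :
    HasDerivAt (fun w => Complex.log ((1 - w) / (1 - lam * w)))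
      ((lam - 1) / ((1 - z) * (1 - lam * z))) z := by
  have h1 : (1:ℂ) - z ≠ 0 := one_sub_ne' z hz
  have h2 : (1:ℂ) - lam * z ≠ 0 :=
    one_sub_ne' _ (by rw [norm_mul, hlam, one_mul]; exact hz)
  have hg : HasDerivAt (fun w => (1 - w) / (1 - lam * w))
      (((0 - 1) * (1 - lam * z) - (1 - z) * (0 - lam * 1)) / (1 - lam * z) ^ 2) z :=
    ((hasDerivAt_const z (1:ℂ)).sub (hasDerivAt_id z)).div
      ((hasDerivAt_const z (1:ℂ)).sub ((hasDerivAt_id z).const_mul lam)) h2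
  have := hg.clog (slit' lam z hlam hz)
  convert this using 1
  field_simp
  ring

theorem stmt15 (μ lam : ℂ) (hμ : 0 < μ.re) (hlam : ‖lam‖ = 1)
    (f : ℂ → ℂ) (hf : memF μ f) (hf' : deriv f 0 = μ / (Real.pi : ℂ) * (lam - 1)) :
    ∀ z ∈ unitDisk,
      f z = Complex.exp (μ / (Real.pi : ℂ) * Complex.log ((1 - z) / (1 - lam * z))) := by
  obtain ⟨hfa, hfne, hf0, hfP⟩ := hf
  have hπ : ((Real.pi : ℝ) : ℂ) ≠ 0 := Complex.ofReal_ne_zero.mpr Real.pi_ne_zero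
  have hμ0 : μ ≠ 0 := by intro h; rw [h] at hμ; simp at hμ
  have h0U : (0:ℂ) ∈ unitDisk := mem_ball_self one_pos
  have habs : ∀ z ∈ unitDisk, ‖z‖ < 1 := by
    intro z hz
    simpa using mem_ball_zero_iff.mp hz
  set P : ℂ → ℂ := fun w => 2 * (Real.pi : ℂ) / μ * (w * deriv f w / f w) + (1 + w) / (1 - w)
    with hPdef
  have hfP' : ∀ z ∈ unitDisk, 0 < (P z).re := hfP
  have hP0 : P 0 = 1 := by simp [hPdef]
  -- differentiability of P
  have hPdiff : ∀ z ∈ unitDisk, DifferentiableAt ℂ P z := by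
    intro z hz
    have h1 : DifferentiableAt ℂ f z := (hfa z hz).differentiableAt
    have h2 : DifferentiableAt ℂ (deriv f) z := (hfa.deriv z hz).differentiableAt
    have h3 : (1:ℂ) - z ≠ 0 := one_sub_ne' z (habs z hz)
    exact ((((differentiableAt_id.mul h2).div h1 (hfne z hz)).const_mul _).add
      (((differentiableAt_const _).add differentiableAt_id).div
        ((differentiableAt_const _).sub differentiableAt_id) h3))
  have hPden : ∀ z ∈ unitDisk, P z + 1 ≠ 0 := by
    intro z hz h
    have := congrArg Complex.re h
    simp at this
    have := hfP' z hz
    linarith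
  set ω : ℂ → ℂ := fun w => (P w - 1) / (P w + 1) with hωdef
  have hω0 : ω 0 = 0 := by simp [hωdef, hP0]
  have hωd : DifferentiableOn ℂ ω (ball (0:ℂ) 1) := by
    intro z hz
    exact (((hPdiff z hz).sub_const 1).div ((hPdiff z hz).add_const 1)
      (hPden z hz)).differentiableWithinAt
  have hωmaps : MapsTo ω (ball (0:ℂ) 1) (ball (ω 0) 1) := by
    rw [hω0]
    intro z hz
    rw [mem_ball_zero_iff]
    have hsq : (‖P z - 1‖)^2 < (‖P z + 1‖)^2 := by
      rw [Complex.sq_norm, Complex.sq_norm, Complex.normSq_apply, Complex.normSq_apply]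
      simp only [Complex.sub_re, Complex.add_re, Complex.sub_im, Complex.add_im,
        Complex.one_re, Complex.one_im]
      nlinarith [hfP' z hz]
    have hlt : ‖P z - 1‖ < ‖P z + 1‖ :=
      lt_of_pow_lt_pow_left₀ 2 (norm_nonneg _) hsq
    have hpos : 0 < ‖P z + 1‖ :=
      (norm_pos_iff.mpr (hPden z hz))
    rw [hωdef]
    simp only [norm_div]
    rw [div_lt_one hpos]
    exact hlt
  -- derivative of P at 0
  have hq : HasDerivAt (fun w => deriv f w / f w)
      (deriv (fun w => deriv f w / f w) 0) 0 := by
    exact (((hfa.deriv 0 h0U).differentiableAt).div ((hfa 0 h0U).differentiableAt)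
      (by rw [hf0]; exact one_ne_zero)).hasDerivAt
  have hP1 : HasDerivAt (fun w : ℂ => (1 + w) / (1 - w)) 2 0 := by
    have ha : HasDerivAt (fun w : ℂ => 1 + w) 1 0 := by
      simpa using (hasDerivAt_id (0:ℂ)).const_add (1:ℂ)
    have hb : HasDerivAt (fun w : ℂ => 1 - w) (-1) 0 := by
      simpa using (hasDerivAt_id (0:ℂ)).const_sub (1:ℂ)
    have := ha.div hb (by norm_num)
    refine this.congr_deriv (Eq.symm ?_)
    norm_num
  have hP2 : HasDerivAt (fun w => w * (deriv f w / f w)) (deriv f 0) 0 := by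
    have := (hasDerivAt_id (0:ℂ)).mul hq
    simp only [one_mul, zero_mul, add_zero, hf0, div_one] at this
    refine this.congr_deriv (Eq.symm ?_)
    simp [hf0]
  have hPD : HasDerivAt P (2 * lam) 0 := by
    have := (hP2.const_mul (2 * (Real.pi:ℂ) / μ)).add hP1
    have heq : (fun w => 2 * (Real.pi:ℂ) / μ * (w * (deriv f w / f w)) + (1 + w) / (1 - w)) = P := by
      funext w; rw [hPdef]; ring
    rw [← heq]
    refine this.congr_deriv (Eq.symm ?_)
    rw [hf']
    field_simp
    ring
  have hωD : HasDerivAt ω lam 0 := by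
    have := (hPD.sub_const 1).div (hPD.add_const 1) (hPden 0 h0U)
    refine this.congr_deriv (Eq.symm ?_)
    rw [hP0]
    field_simp
    ring
  -- Schwarz equality
  have hslope : ‖dslope ω 0 0‖ = 1 / 1 := by
    rw [dslope_same, hωD.deriv]
    simp [hlam]
  have hEq := Complex.affine_of_mapsTo_ball_of_norm_dslope_eq_div hωd (hωmaps.mono_right ball_subset_closedBall)
    (mem_ball_self one_pos) hslope
  have hωz : ∀ z ∈ unitDisk, ω z = lam * z := by
    intro z hz
    have := hEq hz
    rw [hω0, dslope_same, hωD.deriv] at this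
    simpa [smul_eq_mul, mul_comm] using this
  -- key ODE
  have hkey : ∀ z ∈ unitDisk, deriv f z
      = f z * (μ / (Real.pi:ℂ)) * (lam - 1) / ((1 - z) * (1 - lam * z)) := by
    intro z hz
    have h1 : (1:ℂ) - z ≠ 0 := one_sub_ne' z (habs z hz)
    have h2 : (1:ℂ) - lam * z ≠ 0 :=
      one_sub_ne' _ (by rw [norm_mul, hlam, one_mul]; exact habs z hz)
    rcases eq_or_ne z 0 with rfl | hz0
    · rw [hf', hf0]
      simp
    · have hE : P z - 1 = lam * z * (P z + 1) := by
        have h := hωz z hz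
        simp only [hωdef] at h
        exact (div_eq_iff (hPden z hz)).mp h
      simp only [hPdef] at hE
      have hF := hfne z hz
      field_simp at hE
      have hE2 : (2*z) * ((Real.pi:ℂ) * deriv f z * ((1-z)*(1-lam*z)))
          = (2*z) * (μ * f z * (lam-1)) := by linear_combination hE
      have hE3 := mul_left_cancel₀ (mul_ne_zero two_ne_zero hz0) hE2
      rw [eq_div_iff (mul_ne_zero h1 h2)]
      field_simp
      linear_combination hE3
  -- integrate the ODE
  intro z hz
  have hL : ∀ w ∈ unitDisk, HasDerivAt (fun u => Complex.log ((1 - u) / (1 - lam * u)))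
      ((lam - 1) / ((1 - w) * (1 - lam * w))) w := fun w hw =>
    hasDerivAt_L' lam w hlam (habs w hw)
  set c : ℂ := μ / (Real.pi : ℂ) with hc
  set g : ℂ → ℂ := fun w => f w * Complex.exp (-(c * Complex.log ((1 - w) / (1 - lam * w))))
    with hgdef
  have hgD : ∀ w ∈ unitDisk, HasDerivAt g 0 w := by
    intro w hw
    have hF : HasDerivAt f (deriv f w) w := (hfa w hw).differentiableAt.hasDerivAt
    have hExp : HasDerivAt (fun u => Complex.exp (-(c * Complex.log ((1 - u) / (1 - lam * u)))))
        (Complex.exp (-(c * Complex.log ((1 - w) / (1 - lam * w)))) *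
          (-(c * ((lam - 1) / ((1 - w) * (1 - lam * w)))))) w :=
      (((hL w hw).const_mul c).neg).cexp
    have := hF.mul hExp
    refine this.congr_deriv (Eq.symm ?_)
    rw [hkey w hw]
    ring
  have hconst : ∀ w ∈ unitDisk, g w = g 0 := by
    intro w hw
    refine (convex_ball (0:ℂ) 1).is_const_of_fderivWithin_eq_zero
      (fun u hu => ((hgD u hu).differentiableAt).differentiableWithinAt) ?_ hw h0U
    intro u hu
    rw [fderivWithin_of_isOpen isOpen_ball hu, (hgD u hu).hasFDerivAt.fderiv]
    ext
    simp
  have hg0 : g 0 = 1 := by simp [hgdef, hf0]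
  have hz1 := hconst z hz
  rw [hg0] at hz1
  simp only [hgdef] at hz1
  rw [Complex.exp_neg, mul_inv_eq_one₀ (Complex.exp_ne_zero _)] at hz1
  exact hz1
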